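/- arXiv:2505.11947 — 2 statements merged into one kernel-verified Lean document; each statement's English description precedes it below -/
import Mathlib

section
/- The number of binary strings b_1 ... b_m (m ≥ 2) with b_1 = b_m = 1 that contain neither two consecutive zeros nor three consecutive ones equals the m-th Padovan number P_m, where P_1 = P_2 = P_3 = 1 and P_n = P_{n-2} + P_{n-3}. -/
/-- The Padovan sequence with `padovan 1 = padovan 2 = padovan 3 = 1` and
`padovan n = padovan (n-2) + padovan (n-3)`. -/
def padovan : ℕ → ℕ
  | 0 => 1
  | 1 => 1
  | 2 => 1
  | 3 => 1
  | n + 4 => padovan (n + 2) + padovan (n + 1)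

abbrev Good (m : ℕ) (b : Fin m → Bool) : Prop :=
  (∀ i : ℕ, ∀ h : i + 1 < m, ¬(b ⟨i, Nat.lt_of_succ_lt h⟩ = false ∧ b ⟨i + 1, h⟩ = false)) ∧
  (∀ i : ℕ, ∀ h : i + 2 < m,
    ¬(b ⟨i, Nat.lt_of_add_right_lt h⟩ = true ∧ b ⟨i + 1, Nat.lt_of_succ_lt h⟩ = true ∧
      b ⟨i + 2, h⟩ = true))

abbrev S (k : ℕ) : Type :=
  {b : Fin (k + 2) → Bool // b ⟨0, by omega⟩ = true ∧ b ⟨k + 1, by omega⟩ = true ∧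
    Good (k + 2) b}

lemma good_restrict {m n : ℕ} (hnm : n ≤ m) {b : Fin m → Bool} (hb : Good m b) :
    Good n (fun i => b ⟨i.1, by omega⟩) :=
  ⟨fun i h hc => hb.1 i (by omega) hc, fun i h hc => hb.2 i (by omega) hc⟩

lemma factA (k : ℕ) (b : S (k + 3)) (hb : b.1 ⟨k + 3, by omega⟩ = false) :
    b.1 ⟨k + 2, by omega⟩ = true := by
  rcases h2 : b.1 ⟨k + 2, by omega⟩
  · exact absurd ⟨h2, hb⟩ (b.2.2.2.1 (k + 2) (by omega))
  · rfl

lemma factB (k : ℕ) (b : S (k + 3)) (hb : b.1 ⟨k + 3, by omega⟩ = true) :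
    b.1 ⟨k + 2, by omega⟩ = false := by
  rcases h2 : b.1 ⟨k + 2, by omega⟩
  · rfl
  · exact absurd ⟨h2, hb, b.2.2.1⟩ (b.2.2.2.2 (k + 2) (by omega))

lemma factC (k : ℕ) (b : S (k + 3)) (hb : b.1 ⟨k + 3, by omega⟩ = true) :
    b.1 ⟨k + 1, by omega⟩ = true := by
  rcases h1 : b.1 ⟨k + 1, by omega⟩
  · exact absurd ⟨h1, factB k b hb⟩ (b.2.2.2.1 (k + 1) (by omega))
  · rfl

def fwd (k : ℕ) (b : S (k + 3)) : S (k + 1) ⊕ S k :=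
  if h : b.1 ⟨k + 3, by omega⟩ = true then
    Sum.inr ⟨fun i => b.1 ⟨i.1, by omega⟩, b.2.1, factC k b h,
      good_restrict (by omega) b.2.2.2⟩
  else
    Sum.inl ⟨fun i => b.1 ⟨i.1, by omega⟩, b.2.1, factA k b (by simpa using h),
      good_restrict (by omega) b.2.2.2⟩

def ext1 (k : ℕ) (c : Fin (k + 3) → Bool) : Fin (k + 5) → Bool :=
  fun i => if h : i.1 < k + 3 then c ⟨i.1, h⟩ else decide (i.1 = k + 4)

def ext2 (k : ℕ) (c : Fin (k + 2) → Bool) : Fin (k + 5) → Bool :=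
  fun i => if h : i.1 < k + 2 then c ⟨i.1, h⟩ else decide (i.1 ≠ k + 2)

lemma ext1_lt (k : ℕ) (c : Fin (k + 3) → Bool) (i : ℕ) (h : i < k + 3) (h' : i < k + 5) :
    ext1 k c ⟨i, h'⟩ = c ⟨i, h⟩ := dif_pos h

lemma ext1_false' (k : ℕ) (c : Fin (k + 3) → Bool) (i : ℕ) (hi : i = k + 3)
    (h' : i < k + 5) : ext1 k c ⟨i, h'⟩ = false := by subst hi; simp [ext1]

lemma ext1_true' (k : ℕ) (c : Fin (k + 3) → Bool) (i : ℕ) (hi : i = k + 4)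
    (h' : i < k + 5) : ext1 k c ⟨i, h'⟩ = true := by subst hi; simp [ext1]

lemma ext2_lt (k : ℕ) (c : Fin (k + 2) → Bool) (i : ℕ) (h : i < k + 2) (h' : i < k + 5) :
    ext2 k c ⟨i, h'⟩ = c ⟨i, h⟩ := dif_pos h

lemma ext2_false' (k : ℕ) (c : Fin (k + 2) → Bool) (i : ℕ) (hi : i = k + 2)
    (h' : i < k + 5) : ext2 k c ⟨i, h'⟩ = false := by subst hi; simp [ext2]

lemma ext2_true' (k : ℕ) (c : Fin (k + 2) → Bool) (i : ℕ) (hi : i = k + 3 ∨ i = k + 4)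
    (h' : i < k + 5) : ext2 k c ⟨i, h'⟩ = true := by
  rcases hi with rfl | rfl <;> simp [ext2]

lemma ext1_good (k : ℕ) (c : S (k + 1)) : Good (k + 5) (ext1 k c.1) := by
  obtain ⟨c, h0, h1, hg⟩ := c
  have h1' : c ⟨k + 2, by omega⟩ = true := h1
  constructor
  · intro i h hc
    by_cases hlt : i + 1 < k + 3
    · rw [ext1_lt k c i (by omega), ext1_lt k c (i + 1) (by omega)] at hc
      exact hg.1 i (by omega) hc
    · rcases (show i = k + 2 ∨ i = k + 3 by omega) with rfl | rfl
      · rw [ext1_lt k c (k + 2) (by omega)] at hc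
        exact Bool.noConfusion (h1'.symm.trans hc.1)
      · exact Bool.noConfusion
          ((ext1_true' k c (k + 3 + 1) (by omega) h).symm.trans hc.2)
  · intro i h hc
    by_cases hlt : i + 2 < k + 3
    · rw [ext1_lt k c i (by omega), ext1_lt k c (i + 1) (by omega),
        ext1_lt k c (i + 2) (by omega)] at hc
      exact hg.2 i (by omega) hc
    · rcases (show i = k + 1 ∨ i = k + 2 by omega) with rfl | rfl
      · exact Bool.noConfusion
          (hc.2.2.symm.trans (ext1_false' k c (k + 1 + 2) (by omega) h))
      · exact Bool.noConfusion
          (hc.2.1.symm.trans (ext1_false' k c (k + 2 + 1) (by omega) (by omega)))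

lemma ext2_good (k : ℕ) (c : S k) : Good (k + 5) (ext2 k c.1) := by
  obtain ⟨c, h0, h1, hg⟩ := c
  constructor
  · intro i h hc
    by_cases hlt : i + 1 < k + 2
    · rw [ext2_lt k c i (by omega), ext2_lt k c (i + 1) (by omega)] at hc
      exact hg.1 i (by omega) hc
    · rcases (show i = k + 1 ∨ i = k + 2 ∨ i = k + 3 by omega) with rfl | rfl | rfl
      · rw [ext2_lt k c (k + 1) (by omega)] at hc
        exact Bool.noConfusion (h1.symm.trans hc.1)
      · exact Bool.noConfusion
          (hc.2.symm.trans (ext2_true' k c (k + 2 + 1) (by omega) h))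
      · exact Bool.noConfusion
          (hc.2.symm.trans (ext2_true' k c (k + 3 + 1) (by omega) h))
  · intro i h hc
    by_cases hlt : i + 2 < k + 2
    · rw [ext2_lt k c i (by omega), ext2_lt k c (i + 1) (by omega),
        ext2_lt k c (i + 2) (by omega)] at hc
      exact hg.2 i (by omega) hc
    · rcases (show i = k ∨ i = k + 1 ∨ i = k + 2 by omega) with rfl | rfl | rfl
      · exact Bool.noConfusion
          (hc.2.2.symm.trans (ext2_false' i c (i + 2) (by omega) h))
      · exact Bool.noConfusion
          (hc.2.1.symm.trans (ext2_false' k c (k + 1 + 1) (by omega) (by omega)))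
      · exact Bool.noConfusion
          (hc.1.symm.trans (ext2_false' k c (k + 2) (by omega) (by omega)))

def bwd (k : ℕ) (x : S (k + 1) ⊕ S k) : S (k + 3) :=
  match x with
  | Sum.inl c => ⟨ext1 k c.1,
      (ext1_lt k c.1 0 (by omega) (by omega)).trans c.2.1,
      ext1_true' k c.1 (k + 3 + 1) (by omega) (by omega),
      ext1_good k c⟩
  | Sum.inr c => ⟨ext2 k c.1,
      (ext2_lt k c.1 0 (by omega) (by omega)).trans c.2.1,
      ext2_true' k c.1 (k + 3 + 1) (by omega) (by omega),
      ext2_good k c⟩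

def E (k : ℕ) : S (k + 3) ≃ S (k + 1) ⊕ S k where
  toFun := fwd k
  invFun := bwd k
  left_inv b := by
    rcases hb : b.1 ⟨k + 3, by omega⟩ with h | h
    · rw [fwd, dif_neg (by simp [hb])]
      apply Subtype.ext
      funext ⟨i, hi⟩
      show ext1 k _ ⟨i, hi⟩ = b.1 ⟨i, hi⟩
      by_cases h' : i < k + 3
      · rw [ext1_lt k _ i h']
      · rcases (show i = k + 3 ∨ i = k + 4 by omega) with rfl | rfl
        · rw [ext1_false' k _ (k + 3) rfl, hb]
        · rw [ext1_true' k _ (k + 4) rfl]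
          exact (b.2.2.1).symm
    · rw [fwd, dif_pos hb]
      apply Subtype.ext
      funext ⟨i, hi⟩
      show ext2 k _ ⟨i, hi⟩ = b.1 ⟨i, hi⟩
      by_cases h' : i < k + 2
      · rw [ext2_lt k _ i h']
      · rcases (show i = k + 2 ∨ i = k + 3 ∨ i = k + 4 by omega) with rfl | rfl | rfl
        · rw [ext2_false' k _ (k + 2) rfl, factB k b hb]
        · rw [ext2_true' k _ (k + 3) (by omega), hb]
        · rw [ext2_true' k _ (k + 4) (by omega)]
          exact (b.2.2.1).symm
  right_inv x := by
    rcases x with c | c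
    · have hb : ¬ ext1 k c.1 ⟨k + 3, by omega⟩ = true := by
        rw [ext1_false' k c.1 (k + 3) rfl]; simp
      rw [bwd, fwd, dif_neg hb]
      congr 1
      apply Subtype.ext
      funext ⟨i, hi⟩
      exact ext1_lt k c.1 i hi (by omega)
    · have hb : ext2 k c.1 ⟨k + 3, by omega⟩ = true :=
        ext2_true' k c.1 (k + 3) (by omega) (by omega)
      rw [bwd, fwd, dif_pos hb]
      congr 1
      apply Subtype.ext
      funext ⟨i, hi⟩
      exact ext2_lt k c.1 i hi (by omega)

lemma S0_unique (b : S 0) : b.1 = fun _ => true := by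
  obtain ⟨b, h0, h1, -⟩ := b
  funext ⟨i, hi⟩
  interval_cases i
  · exact h0
  · exact h1

lemma cardS0 : Nat.card (S 0) = 1 := by
  have : Unique (S 0) := by
    refine ⟨⟨⟨fun _ => true, rfl, rfl, ?_, ?_⟩⟩, fun b => Subtype.ext (S0_unique b)⟩
    · intro i h hc; simp at hc
    · intro i h hc; omega
  exact Nat.card_unique

lemma S1_unique (b : S 1) : b.1 = fun i => decide (i.val ≠ 1) := by
  obtain ⟨b, h0, h1, -, h3⟩ := b
  have hmid : b ⟨1, by omega⟩ = false := by
    rcases hb : b ⟨1, by omega⟩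
    · rfl
    · exact absurd ⟨h0, hb, h1⟩ (h3 0 (by omega))
  funext ⟨i, hi⟩
  interval_cases i
  · simpa using h0
  · simpa using hmid
  · simpa using h1

lemma cardS1 : Nat.card (S 1) = 1 := by
  have : Unique (S 1) := by
    refine ⟨⟨⟨fun i => decide (i.val ≠ 1), by simp, by simp, ?_, ?_⟩⟩,
      fun b => Subtype.ext (S1_unique b)⟩
    · intro i h hc
      have hub : i ≤ 1 := by omega
      interval_cases i <;> simp_all
    · intro i h hc
      have hub : i = 0 := by omega
      subst hub; simp_all
  exact Nat.card_unique

lemma S2_determined (b : S 2) (i : ℕ) (hi : i < 4) :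
    b.1 ⟨i, hi⟩ = (fun j : Fin 4 =>
      if j.val = 0 then true else if j.val = 1 then b.1 ⟨1, by omega⟩
      else if j.val = 2 then !(b.1 ⟨1, by omega⟩) else true) ⟨i, hi⟩ := by
  obtain ⟨b, h0, h1, h2, h3⟩ := b
  have h2c : b ⟨2, by omega⟩ = !(b ⟨1, by omega⟩) := by
    rcases hb1 : b ⟨1, by omega⟩ <;> rcases hb2 : b ⟨2, by omega⟩ <;> simp [hb1, hb2]
    · exact (h2 1 (by omega)) ⟨hb1, hb2⟩
    · exact (h3 0 (by omega)) ⟨h0, hb1, hb2⟩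
  interval_cases i
  · exact h0
  · rfl
  · exact h2c
  · exact h1

def S2equiv : S 2 ≃ Bool where
  toFun b := b.1 ⟨1, by omega⟩
  invFun x := ⟨fun j => if j.val = 0 then true else if j.val = 1 then x
      else if j.val = 2 then !x else true, by simp, by simp, by
        intro i h hc
        have hub : i ≤ 2 := by omega
        interval_cases i <;> rcases x <;> simp_all, by
        intro i h hc
        have hub : i ≤ 1 := by omega
        interval_cases i <;> rcases x <;> simp_all⟩
  left_inv b := by
    apply Subtype.ext
    funext ⟨i, hi⟩
    exact (S2_determined b i hi).symm
  right_inv x := by simp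

lemma cardS2 : Nat.card (S 2) = 2 := by
  rw [Nat.card_congr S2equiv]; simp

lemma cardS : ∀ k : ℕ, Nat.card (S k) = padovan (k + 2)
  | 0 => cardS0
  | 1 => cardS1
  | 2 => cardS2
  | (k + 3) => by
      rw [Nat.card_congr (E k), Nat.card_sum, cardS (k + 1), cardS k]
      rfl

/-- The number of binary strings `b_1 ... b_m` (`m ≥ 2`) with `b_1 = b_m = 1`
containing neither two consecutive zeros nor three consecutive ones equals the
`m`-th Padovan number. -/
theorem stmt_2 (m : ℕ) (hm : 2 ≤ m) :
    Nat.card {b : Fin m → Bool //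
      b ⟨0, by omega⟩ = true ∧ b ⟨m - 1, by omega⟩ = true ∧
      (∀ i : ℕ, ∀ h : i + 1 < m, ¬(b ⟨i, by omega⟩ = false ∧ b ⟨i + 1, h⟩ = false)) ∧
      (∀ i : ℕ, ∀ h : i + 2 < m,
        ¬(b ⟨i, by omega⟩ = true ∧ b ⟨i + 1, by omega⟩ = true ∧ b ⟨i + 2, h⟩ = true))} =
    padovan m := by
  obtain ⟨k, rfl⟩ : ∃ k, m = k + 2 := ⟨m - 2, by omega⟩
  exact cardS k
end

section
/- The number of maximal matchings in an undirected path with ℓ ≥ 1 edges equals the Padovan number P_{ℓ+2}, where P_1 = P_2 = P_3 = 1 and P_n = P_{n-2} + P_{n-3}. -/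
set_option linter.unnecessarySimpa false

/-- The path graph with `n` edges, on vertices `{0, 1, ..., n}`, with edges `{i, i+1}`. -/
def pathGraph (n : ℕ) : SimpleGraph (Fin (n + 1)) :=
  SimpleGraph.fromRel (fun u v => (v : ℕ) = (u : ℕ) + 1)

/-- A matching in a simple graph `G`: a set of edges of `G` that are pairwise
vertex-disjoint (the empty set is allowed). -/
def IsMatching {V : Type*} (G : SimpleGraph V) (M : Set (Sym2 V)) : Prop :=
  M ⊆ G.edgeSet ∧ ∀ e ∈ M, ∀ f ∈ M, e ≠ f → ∀ v : V, ¬(v ∈ e ∧ v ∈ f)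

/-- A maximal matching: a matching not properly contained in any other matching. -/
def IsMaximalMatching {V : Type*} (G : SimpleGraph V) (M : Set (Sym2 V)) : Prop :=
  IsMatching G M ∧ ∀ M' : Set (Sym2 V), IsMatching G M' → M ⊆ M' → M' = M

def pad {n : ℕ} (b : Fin n → Bool) (i : ℕ) : Bool :=
  if h : i < n then b ⟨i, h⟩ else false

def OkF (n : ℕ) (b : Fin n → Bool) : Prop :=
  (∀ i < n, ¬(pad b i = true ∧ pad b (i+1) = true)) ∧
  (∀ i < n, pad b i = false → (pad b (i+1) = true ∨ (0 < i ∧ pad b (i-1) = true)))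

instance (n : ℕ) : DecidablePred (OkF n) := fun b => by
  unfold OkF; infer_instance

@[simp] lemma pad_cons_succ {n : ℕ} (a : Bool) (b : Fin n → Bool) (i : ℕ) :
    pad (Fin.cons a b) (i+1) = pad b i := by
  unfold pad
  by_cases h : i < n
  · rw [dif_pos (by omega), dif_pos h]
    exact Fin.cons_succ (α := fun _ => Bool) a b ⟨i, h⟩
  · rw [dif_neg (by omega), dif_neg h]

lemma pad_cons {n : ℕ} (a : Bool) (b : Fin n → Bool) (i : ℕ) :
    pad (Fin.cons a b) i = if i = 0 then a else pad b (i-1) := by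
  match i with
  | 0 => simp [pad]
  | (k+1) => simp

@[simp] lemma pad_val {n : ℕ} (b : Fin n → Bool) (i : Fin n) : pad b i = b i := by
  simp [pad]

lemma pad_big {n : ℕ} (b : Fin n → Bool) (i : ℕ) (h : ¬ i < n) : pad b i = false := by
  simp [pad, h]

lemma okF_cons10 {n : ℕ} (b : Fin n → Bool) :
    OkF (n+2) (Fin.cons true (Fin.cons false b)) ↔ OkF n b := by
  constructor
  · rintro ⟨h1, h2⟩
    constructor
    · intro i hi hb
      exact h1 (i+2) (by omega) (by simpa [pad_cons] using hb)
    · intro i hi hb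
      match i with
      | 0 =>
        rcases h2 2 (by omega) (by simpa [pad_cons] using hb) with h | h
        · left; simpa [pad_cons] using h
        · exfalso; simpa [pad_cons] using h.2
      | (k+1) =>
        rcases h2 (k+3) (by omega) (by simpa [pad_cons] using hb) with h | h
        · left; simpa [pad_cons] using h
        · right; refine ⟨by omega, ?_⟩
          have := h.2
          simpa [pad_cons] using this
  · rintro ⟨h1, h2⟩
    constructor
    · intro i hi hb
      match i with
      | 0 => simpa [pad_cons] using hb.2
      | 1 => simpa [pad_cons] using hb.1
      | (k+2) =>
        by_cases hk : k + 1 < n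
        · exact h1 k (by omega) (by simpa [pad_cons] using hb)
        · have := hb.2
          rw [show k+2+1 = (k+1)+1+1 from rfl, pad_cons_succ, pad_cons_succ,
            pad_big b (k+1) hk] at this
          simp at this
    · intro i hi hb
      match i with
      | 0 => simpa [pad_cons] using hb
      | 1 => right; exact ⟨by omega, by simp [pad_cons]⟩
      | (k+2) =>
        rcases h2 k (by omega) (by simpa [pad_cons] using hb) with h | h
        · left; simpa [pad_cons] using h
        · right
          refine ⟨by omega, ?_⟩
          obtain ⟨hk0, hk⟩ := h
          match k, hk0 with
          | (m+1), _ => simpa [pad_cons] using hk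

lemma okF_cons010 {n : ℕ} (b : Fin n → Bool) :
    OkF (n+3) (Fin.cons false (Fin.cons true (Fin.cons false b))) ↔ OkF n b := by
  constructor
  · rintro ⟨h1, h2⟩
    constructor
    · intro i hi hb
      exact h1 (i+3) (by omega) (by simpa [pad_cons] using hb)
    · intro i hi hb
      match i with
      | 0 =>
        rcases h2 3 (by omega) (by simpa [pad_cons] using hb) with h | h
        · left; simpa [pad_cons] using h
        · exfalso; simpa [pad_cons] using h.2
      | (k+1) =>
        rcases h2 (k+4) (by omega) (by simpa [pad_cons] using hb) with h | h
        · left; simpa [pad_cons] using h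
        · right; refine ⟨by omega, ?_⟩
          have := h.2
          simpa [pad_cons] using this
  · rintro ⟨h1, h2⟩
    constructor
    · intro i hi hb
      match i with
      | 0 => simpa [pad_cons] using hb.1
      | 1 => simpa [pad_cons] using hb.2
      | 2 => simpa [pad_cons] using hb.1
      | (k+3) =>
        by_cases hk : k + 1 < n
        · exact h1 k (by omega) (by simpa [pad_cons] using hb)
        · have := hb.2
          rw [show k+3+1 = (k+1)+1+1+1 from rfl, pad_cons_succ, pad_cons_succ,
            pad_cons_succ, pad_big b (k+1) hk] at this
          simp at this
    · intro i hi hb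
      match i with
      | 0 => left; simp [pad_cons]
      | 1 => simpa [pad_cons] using hb
      | 2 => right; exact ⟨by omega, by simp [pad_cons]⟩
      | (k+3) =>
        rcases h2 k (by omega) (by simpa [pad_cons] using hb) with h | h
        · left; simpa [pad_cons] using h
        · right
          refine ⟨by omega, ?_⟩
          obtain ⟨hk0, hk⟩ := h
          match k, hk0 with
          | (m+1), _ => simpa [pad_cons] using hk

lemma okF_head {n : ℕ} (b : Fin (n+3) → Bool) (h : OkF (n+3) b) :
    (pad b 0 = true ∧ pad b 1 = false) ∨
    (pad b 0 = false ∧ pad b 1 = true ∧ pad b 2 = false) := by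
  obtain ⟨h1, h2⟩ := h
  by_cases h0 : pad b 0 = true
  · left
    refine ⟨h0, ?_⟩
    by_contra hb1
    exact h1 0 (by omega) ⟨h0, by simpa using hb1⟩
  · right
    have h0' : pad b 0 = false := by simpa using h0
    have hb1 : pad b 1 = true := by
      rcases h2 0 (by omega) h0' with h | h
      · exact h
      · exact absurd h.1 (by omega)
    refine ⟨h0', hb1, ?_⟩
    by_contra hb2
    exact h1 1 (by omega) ⟨hb1, by simpa using hb2⟩
-- appended to core
noncomputable def A (n : ℕ) : ℕ := Nat.card {b : Fin n → Bool // OkF n b}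

lemma A_one : A 1 = 1 := by rw [A, Nat.card_eq_fintype_card]; decide
lemma A_two : A 2 = 2 := by rw [A, Nat.card_eq_fintype_card]; decide
lemma A_three : A 3 = 2 := by rw [A, Nat.card_eq_fintype_card]; decide

lemma pad_tail {n : ℕ} (b : Fin (n+1) → Bool) (i : ℕ) :
    pad (Fin.tail b) i = pad b (i+1) := by
  conv_rhs => rw [← Fin.cons_self_tail b]
  rw [pad_cons_succ]

lemma A_rec (n : ℕ) : A (n+4) = A (n+2) + A (n+1) := by
  have key : Nat.card ({b : Fin (n+2) → Bool // OkF (n+2) b} ⊕ {b : Fin (n+1) → Bool // OkF (n+1) b})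
      = A (n+4) := by
    apply Nat.card_congr
    apply Equiv.ofBijective (f := fun x => match x with
      | Sum.inl ⟨b, hb⟩ => (⟨Fin.cons true (Fin.cons false b), (okF_cons10 b).mpr hb⟩ :
          {b : Fin (n+4) → Bool // OkF (n+4) b})
      | Sum.inr ⟨b, hb⟩ => ⟨Fin.cons false (Fin.cons true (Fin.cons false b)),
          (okF_cons010 b).mpr hb⟩)
    constructor
    · rintro (⟨b, hb⟩ | ⟨b, hb⟩) (⟨b', hb'⟩ | ⟨b', hb'⟩) h <;>
        simp only [Subtype.mk.injEq] at h
      · have := Fin.cons_right_injective _ (Fin.cons_right_injective _ h)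
        simp [this]
      · have := congrFun h 0
        simp at this
      · have := congrFun h 0
        simp at this
      · have := Fin.cons_right_injective _ (Fin.cons_right_injective _
          (Fin.cons_right_injective _ h))
        simp [this]
    · rintro ⟨b, hb⟩
      rcases okF_head b hb with ⟨h0, h1⟩ | ⟨h0, h1, h2⟩
      · have hb0 : b 0 = true := by rw [← pad_val b 0]; exact h0
        have hb1 : Fin.tail b 0 = false := by
          have e : Fin.tail b 0 = b 1 := rfl
          rw [e, ← pad_val b 1]; exact h1
        have hb' : Fin.cons true (Fin.cons false (Fin.tail (Fin.tail b))) = b := by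
          conv_rhs => rw [← Fin.cons_self_tail b, ← Fin.cons_self_tail (Fin.tail b), hb0, hb1]
        refine ⟨Sum.inl ⟨Fin.tail (Fin.tail b), ?_⟩, ?_⟩
        · rw [← okF_cons10, hb']; exact hb
        · exact Subtype.ext hb'
      · have hb0 : b 0 = false := by rw [← pad_val b 0]; exact h0
        have hb1 : Fin.tail b 0 = true := by
          have e : Fin.tail b 0 = b 1 := rfl
          rw [e, ← pad_val b 1]; exact h1
        have hb2 : Fin.tail (Fin.tail b) 0 = false := by
          have e : Fin.tail (Fin.tail b) 0 = b 2 := rfl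
          rw [e, ← pad_val b 2]; exact h2
        have hb' : Fin.cons false (Fin.cons true (Fin.cons false
            (Fin.tail (Fin.tail (Fin.tail b))))) = b := by
          conv_rhs => rw [← Fin.cons_self_tail b, ← Fin.cons_self_tail (Fin.tail b),
            ← Fin.cons_self_tail (Fin.tail (Fin.tail b)), hb0, hb1, hb2]
        refine ⟨Sum.inr ⟨Fin.tail (Fin.tail (Fin.tail b)), ?_⟩, ?_⟩
        · rw [← okF_cons010, hb']; exact hb
        · exact Subtype.ext hb'
  rw [← key, Nat.card_sum]
  rfl

lemma A_eq_padovan : ∀ n, 1 ≤ n → A n = padovan (n+2) := by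
  intro n
  induction n using Nat.strong_induction_on with
  | _ n ih =>
    match n with
    | 0 => intro h; exact absurd h (by omega)
    | 1 => intro _; rw [A_one]; rfl
    | 2 => intro _; rw [A_two]; rfl
    | 3 => intro _; rw [A_three]; rfl
    | (m+4) =>
      intro _
      have e1 := ih (m+2) (by omega) (by omega)
      have e2 := ih (m+1) (by omega) (by omega)
      rw [A_rec, e1, e2]
      have e3 : m+4+2 = (m+2)+4 := by omega
      have e4 : m+1+2 = m+2+1 := by omega
      rw [e4]
      conv_rhs => rw [e3, padovan]


def PE (ℓ : ℕ) (i : Fin ℓ) : Sym2 (Fin (ℓ+1)) := s(i.castSucc, i.succ)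

lemma mem_PE {ℓ : ℕ} (v : Fin (ℓ+1)) (i : Fin ℓ) :
    v ∈ PE ℓ i ↔ ((v : ℕ) = i ∨ (v : ℕ) = i + 1) := by
  simp [PE, Sym2.mem_iff, Fin.ext_iff]

lemma PE_mem_edgeSet {ℓ : ℕ} (i : Fin ℓ) : PE ℓ i ∈ (pathGraph ℓ).edgeSet := by
  rw [PE, SimpleGraph.mem_edgeSet, pathGraph, SimpleGraph.fromRel_adj]
  refine ⟨?_, Or.inl ?_⟩
  · intro h
    have := congrArg Fin.val h
    simp at this
  · simp

lemma PE_inj {ℓ : ℕ} : Function.Injective (PE ℓ) := by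
  intro i j h
  rw [PE, PE, Sym2.eq_iff] at h
  rcases h with ⟨h1, _⟩ | ⟨h1, h2⟩
  · exact Fin.castSucc_injective _ h1
  · have e1 := congrArg Fin.val h1
    have e2 := congrArg Fin.val h2
    simp at e1 e2
    apply Fin.ext; omega

lemma edge_eq_PE {ℓ : ℕ} (e : Sym2 (Fin (ℓ+1))) (he : e ∈ (pathGraph ℓ).edgeSet) :
    ∃ i : Fin ℓ, e = PE ℓ i := by
  induction e with
  | _ u v =>
    rw [SimpleGraph.mem_edgeSet, pathGraph, SimpleGraph.fromRel_adj] at he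
    obtain ⟨-, h | h⟩ := he
    · have hu : (u : ℕ) < ℓ := by have := v.isLt; omega
      refine ⟨⟨u, hu⟩, ?_⟩
      have e1 : u = Fin.castSucc ⟨u, hu⟩ := by apply Fin.ext; simp
      have e2 : v = Fin.succ ⟨(u : ℕ), hu⟩ := by apply Fin.ext; simp [h]
      rw [PE]; congr 1
    · have hv : (v : ℕ) < ℓ := by have := u.isLt; omega
      refine ⟨⟨v, hv⟩, ?_⟩
      have e1 : v = Fin.castSucc ⟨v, hv⟩ := by apply Fin.ext; simp
      have e2 : u = Fin.succ ⟨(v : ℕ), hv⟩ := by apply Fin.ext; simp [h]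
      rw [PE, Sym2.eq_swap]; congr 1
lemma pad_lt {n : ℕ} (b : Fin n → Bool) {i : ℕ} (h : i < n) : pad b i = b ⟨i, h⟩ := by
  simp [pad, h]

def FS (ℓ : ℕ) (b : Fin ℓ → Bool) : Set (Sym2 (Fin (ℓ+1))) :=
  {e | ∃ i : Fin ℓ, b i = true ∧ e = PE ℓ i}

lemma mem_FS {ℓ : ℕ} (b : Fin ℓ → Bool) (i : Fin ℓ) : PE ℓ i ∈ FS ℓ b ↔ b i = true := by
  constructor
  · rintro ⟨j, hj, hEq⟩
    rw [PE_inj hEq]; exact hj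
  · intro h; exact ⟨i, h, rfl⟩

lemma FS_isMaximal {ℓ : ℕ} (b : Fin ℓ → Bool) (hb : OkF ℓ b) :
    IsMaximalMatching (pathGraph ℓ) (FS ℓ b) := by
  obtain ⟨hInd, hDom⟩ := hb
  have hmatch : IsMatching (pathGraph ℓ) (FS ℓ b) := by
    constructor
    · rintro e ⟨i, hi, rfl⟩
      exact PE_mem_edgeSet i
    · rintro e ⟨i, hi, rfl⟩ f ⟨j, hj, rfl⟩ hne v ⟨hvi, hvj⟩
      rw [mem_PE] at hvi hvj
      have hij : (i : ℕ) ≠ (j : ℕ) := fun h => hne (by rw [Fin.ext_iff.mpr h])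
      have hcase : (j : ℕ) = (i : ℕ) + 1 ∨ (i : ℕ) = (j : ℕ) + 1 := by omega
      rcases hcase with h | h
      · apply hInd i i.isLt
        constructor
        · rw [pad_lt b i.isLt]; simpa using hi
        · rw [← h, pad_lt b (h ▸ j.isLt)]; simpa using hj
      · apply hInd j j.isLt
        constructor
        · rw [pad_lt b j.isLt]; simpa using hj
        · rw [← h, pad_lt b (h ▸ i.isLt)]; simpa using hi
  refine ⟨hmatch, ?_⟩
  intro M' hM' hsub
  refine Set.Subset.antisymm ?_ hsub
  intro e he
  obtain ⟨i, rfl⟩ := edge_eq_PE e (hM'.1 he)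
  by_cases hbi : b i = true
  · exact ⟨i, hbi, rfl⟩
  · exfalso
    have hbi' : pad b i = false := by
      rw [pad_lt b i.isLt]; simpa using hbi
    have hd := hDom i i.isLt hbi'
    rcases hd with h | ⟨hpos, h⟩
    · have hlt : (i : ℕ) + 1 < ℓ := by
        by_contra hcon
        rw [pad_big b _ hcon] at h; simp at h
      set j : Fin ℓ := ⟨(i : ℕ) + 1, hlt⟩ with hj
      have hbj : b j = true := by rwa [pad_lt b hlt] at h
      have hEj : PE ℓ j ∈ M' := hsub ⟨j, hbj, rfl⟩
      have hne : PE ℓ i ≠ PE ℓ j := by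
        intro hc
        have := congrArg Fin.val (PE_inj hc)
        simp [hj] at this
      refine hM'.2 _ he _ hEj hne ⟨(i : ℕ) + 1, by omega⟩ ⟨?_, ?_⟩
      · rw [mem_PE]; right; rfl
      · rw [mem_PE]; left; rfl
    · have hlt : (i : ℕ) - 1 < ℓ := by omega
      set j : Fin ℓ := ⟨(i : ℕ) - 1, hlt⟩ with hj
      have hbj : b j = true := by rwa [pad_lt b hlt] at h
      have hEj : PE ℓ j ∈ M' := hsub ⟨j, hbj, rfl⟩
      have hne : PE ℓ i ≠ PE ℓ j := by
        intro hc
        have := congrArg Fin.val (PE_inj hc)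
        simp [hj] at this
        omega
      refine hM'.2 _ he _ hEj hne ⟨(i : ℕ), by omega⟩ ⟨?_, ?_⟩
      · rw [mem_PE]; left; rfl
      · rw [mem_PE]; right; simp [hj]; omega

lemma card_max (ℓ : ℕ) :
    Nat.card {M : Set (Sym2 (Fin (ℓ + 1))) // IsMaximalMatching (pathGraph ℓ) M} = A ℓ := by
  classical
  rw [A]
  apply Nat.card_congr
  apply Equiv.symm
  apply Equiv.ofBijective (f := fun x : {b : Fin ℓ → Bool // OkF ℓ b} =>
    (⟨FS ℓ x.1, FS_isMaximal x.1 x.2⟩ :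
      {M : Set (Sym2 (Fin (ℓ + 1))) // IsMaximalMatching (pathGraph ℓ) M}))
  constructor
  · rintro ⟨b, hb⟩ ⟨b', hb'⟩ h
    simp only [Subtype.mk.injEq] at h
    refine Subtype.ext (funext fun i => ?_)
    have := congrArg (PE ℓ i ∈ ·) h
    simp only [eq_iff_iff, mem_FS] at this
    cases hx : b i <;> cases hy : b' i <;> simp_all
  · rintro ⟨M, hM⟩
    set b : Fin ℓ → Bool := fun i => decide (PE ℓ i ∈ M) with hbdef
    have hbi : ∀ i : Fin ℓ, b i = true ↔ PE ℓ i ∈ M := by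
      intro i; simp [hbdef]
    have hFS : FS ℓ b = M := by
      apply Set.Subset.antisymm
      · rintro e ⟨i, hi, rfl⟩
        exact (hbi i).mp hi
      · intro e he
        obtain ⟨i, rfl⟩ := edge_eq_PE e (hM.1.1 he)
        exact ⟨i, (hbi i).mpr he, rfl⟩
    have hOk : OkF ℓ b := by
      constructor
      · intro i hi ⟨h1, h2⟩
        rw [pad_lt b hi] at h1
        have hlt : i + 1 < ℓ := by
          by_contra hcon
          rw [pad_big b _ hcon] at h2; simp at h2
        rw [pad_lt b hlt] at h2
        have m1 : PE ℓ ⟨i, hi⟩ ∈ M := (hbi _).mp h1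
        have m2 : PE ℓ ⟨i+1, hlt⟩ ∈ M := (hbi _).mp h2
        have hne : PE ℓ (⟨i, hi⟩ : Fin ℓ) ≠ PE ℓ ⟨i+1, hlt⟩ := by
          intro hc
          have := congrArg Fin.val (PE_inj hc)
          simp at this
        refine hM.1.2 _ m1 _ m2 hne ⟨i+1, by omega⟩ ⟨?_, ?_⟩
        · rw [mem_PE]; right; rfl
        · rw [mem_PE]; left; rfl
      · intro i hi hfalse
        rw [pad_lt b hi] at hfalse
        have hnotM : PE ℓ ⟨i, hi⟩ ∉ M := by
          intro hc
          rw [← hbi] at hc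
          simp [hc] at hfalse
        by_contra hcon
        push_neg at hcon
        obtain ⟨hc1, hc2⟩ := hcon
        -- M ∪ {PE i} is a matching
        have key : ∀ j : Fin ℓ, PE ℓ j ∈ M → ∀ v, ¬(v ∈ PE ℓ (⟨i, hi⟩ : Fin ℓ) ∧ v ∈ PE ℓ j) := by
          intro j hjM v ⟨hv1, hv2⟩
          rw [mem_PE] at hv1 hv2
          simp only [Fin.val_mk] at hv1
          have hji : (j : ℕ) ≠ i := by
            intro hc
            apply hnotM
            have : (⟨i, hi⟩ : Fin ℓ) = j := by apply Fin.ext; simp [hc]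
            rwa [this]
          have : (j : ℕ) = i + 1 ∨ (j : ℕ) + 1 = i := by omega
          rcases this with h | h
          · have : pad b (i+1) = true := by
              rw [← h, pad_lt b j.isLt]
              simp [hbi, hjM]
            simp [this] at hc1
          · have h0 : 0 < i := by omega
            have : pad b (i-1) = true := by
              have : (j : ℕ) = i - 1 := by omega
              rw [← this, pad_lt b j.isLt]
              simp [hbi, hjM]
            simp [this] at hc2
            omega
        have hM' : IsMatching (pathGraph ℓ) (insert (PE ℓ ⟨i, hi⟩) M) := by
          constructor
          · rintro e (rfl | he)
            · exact PE_mem_edgeSet _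
            · exact hM.1.1 he
          · rintro e (rfl | he) f (rfl | hf) hne v ⟨hv1, hv2⟩
            · exact hne rfl
            · obtain ⟨j, rfl⟩ := edge_eq_PE f (hM.1.1 hf)
              exact key j hf v ⟨hv1, hv2⟩
            · obtain ⟨j, rfl⟩ := edge_eq_PE e (hM.1.1 he)
              exact key j he v ⟨hv2, hv1⟩
            · exact hM.1.2 e he f hf hne v ⟨hv1, hv2⟩
        have := hM.2 _ hM' (Set.subset_insert _ _)
        apply hnotM
        rw [← this]
        exact Set.mem_insert _ _
    exact ⟨⟨b, hOk⟩, Subtype.ext hFS⟩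

/-- The number of maximal matchings in an undirected path with `ℓ ≥ 1` edges
equals the Padovan number `P_{ℓ+2}`. -/
theorem stmt_6 (ℓ : ℕ) (hℓ : 1 ≤ ℓ) :
    Nat.card {M : Set (Sym2 (Fin (ℓ + 1))) // IsMaximalMatching (pathGraph ℓ) M} =
    padovan (ℓ + 2) := by
  rw [card_max, A_eq_padovan ℓ hℓ]
end
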